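/- Matrix Perturbation Lemma, expansion estimate: For every κ ∈ (0, 5] there exists b₀ ∈ (0, κ) such that for every b ∈ (0, b₀) there exists λ with b < λ < min(1, κ) with the following property. Let n ≥ 1, let v ∈ ℝ² be a unit vector, and let A₁, …, Aₙ and A₁′, …, Aₙ′ be 2×2 real matrices with det Aᵢ = b, det Aᵢ′ = b, ‖Aᵢ‖ ≤ 5 and ‖Aᵢ′‖ ≤ 5 for all 1 ≤ i ≤ n. If ‖Aⁱ v‖ ≥ κⁱ and ‖Aᵢ − Aᵢ′‖ < λⁱ for all 1 ≤ i ≤ n, then ‖A′ⁱ v‖ ≥ κⁱ / 2 for all 1 ≤ i ≤ n. -/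

import Mathlib

noncomputable section

/-- The Euclidean plane. -/
abbrev E2 := EuclideanSpace ℝ (Fin 2)

/-- Given a sequence of linear maps `A₁, A₂, …` on the plane, `matProd A i = Aᵢ ⋯ A₂ A₁`
(with `matProd A 0 = id`). -/
def matProd (A : ℕ → (E2 →L[ℝ] E2)) : ℕ → (E2 →L[ℝ] E2)
  | 0 => ContinuousLinearMap.id ℝ E2
  | (i + 1) => (A (i + 1)).comp (matProd A i)

/-! ### Auxiliary material -/

open RealInnerProductSpace

def mpeCross (x y : E2) : ℝ := x 0 * y 1 - x 1 * y 0

lemma mpe_inner (x y : E2) : ⟪x, y⟫ = x 0 * y 0 + x 1 * y 1 := by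
  simp [PiLp.inner_apply, RCLike.inner_apply, Fin.sum_univ_two]; ring

lemma mpe_norm_sq (x : E2) : ‖x‖ ^ 2 = x 0 ^ 2 + x 1 ^ 2 := by
  rw [← real_inner_self_eq_norm_sq, mpe_inner]; ring

lemma mpe_lagrange (x y : E2) :
    ⟪x, y⟫ ^ 2 + mpeCross x y ^ 2 = ‖x‖ ^ 2 * ‖y‖ ^ 2 := by
  rw [mpe_inner, mpe_norm_sq, mpe_norm_sq, mpeCross]; ring

lemma mpe_abs_cross_le (x y : E2) : |mpeCross x y| ≤ ‖x‖ * ‖y‖ := by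
  have h := mpe_lagrange x y
  have h1 : (0:ℝ) ≤ ‖x‖ * ‖y‖ := mul_nonneg (norm_nonneg x) (norm_nonneg y)
  nlinarith [sq_abs (mpeCross x y), sq_nonneg (⟪x, y⟫), abs_nonneg (mpeCross x y)]

lemma mpe_basis_expand (x : E2) :
    x = x 0 • (EuclideanSpace.single 0 (1:ℝ)) + x 1 • (EuclideanSpace.single 1 (1:ℝ)) := by
  ext i; fin_cases i <;> simp [EuclideanSpace.single_apply]

lemma mpe_det_eq (T : E2 →L[ℝ] E2) :
    LinearMap.det (T : E2 →ₗ[ℝ] E2)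
      = mpeCross (T (EuclideanSpace.single 0 1)) (T (EuclideanSpace.single 1 1)) := by
  rw [← LinearMap.det_toMatrix (EuclideanSpace.basisFun (Fin 2) ℝ).toBasis]
  rw [Matrix.det_fin_two]
  simp [LinearMap.toMatrix_apply, mpeCross, EuclideanSpace.basisFun_apply, mul_comm]

lemma mpe_apply_coord (T : E2 →L[ℝ] E2) (x : E2) (j : Fin 2) :
    T x j = x 0 * T (EuclideanSpace.single 0 1) j + x 1 * T (EuclideanSpace.single 1 1) j := by
  conv_lhs => rw [mpe_basis_expand x]
  rw [map_add, map_smul, map_smul, PiLp.add_apply, PiLp.smul_apply, PiLp.smul_apply,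
    smul_eq_mul, smul_eq_mul]

lemma mpe_cross_map (T : E2 →L[ℝ] E2) (x y : E2) :
    mpeCross (T x) (T y) = LinearMap.det (T : E2 →ₗ[ℝ] E2) * mpeCross x y := by
  rw [mpe_det_eq]
  simp only [mpeCross]
  rw [mpe_apply_coord T x 0, mpe_apply_coord T x 1, mpe_apply_coord T y 0, mpe_apply_coord T y 1]
  ring

lemma mpe_cross_add_left (x y z : E2) : mpeCross (x + y) z = mpeCross x z + mpeCross y z := by
  simp only [mpeCross, PiLp.add_apply]; ring

lemma mpe_cross_sub_left (x y z : E2) : mpeCross (x - y) z = mpeCross x z - mpeCross y z := by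
  simp only [mpeCross, PiLp.sub_apply]; ring

lemma mpe_cross_smul_left (a : ℝ) (x z : E2) : mpeCross (a • x) z = a * mpeCross x z := by
  simp only [mpeCross, PiLp.smul_apply, smul_eq_mul]; ring

lemma mpe_cross_self (x : E2) : mpeCross x x = 0 := by simp [mpeCross]; ring

lemma matProd_succ_apply (A : ℕ → (E2 →L[ℝ] E2)) (p : ℕ) (v : E2) :
    matProd A (p + 1) v = A (p + 1) (matProd A p v) := rfl

lemma matProd_zero_apply (A : ℕ → (E2 →L[ℝ] E2)) (v : E2) : matProd A 0 v = v := rfl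

lemma mpe_norm_matProd_le (A : ℕ → (E2 →L[ℝ] E2)) (v : E2) (hv : ‖v‖ = 1) (n : ℕ)
    (hA : ∀ i, 1 ≤ i → i ≤ n → ‖A i‖ ≤ 5) :
    ∀ i, i ≤ n → ‖matProd A i v‖ ≤ 5 ^ i := by
  intro i
  induction i with
  | zero => intro _; simp [matProd_zero_apply, hv]
  | succ p IH =>
      intro h
      have h5 : ‖matProd A p v‖ ≤ 5 ^ p := IH (Nat.le_of_succ_le h)
      rw [matProd_succ_apply]
      calc ‖A (p+1) (matProd A p v)‖ ≤ ‖A (p+1)‖ * ‖matProd A p v‖ :=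
            (A (p+1)).le_opNorm _
        _ ≤ 5 * 5 ^ p := by
            apply mul_le_mul (hA _ (Nat.succ_le_succ (Nat.zero_le p)) h) h5 (norm_nonneg _)
            norm_num
        _ = 5 ^ (p+1) := by ring


def mpeC (b : ℝ) : ℕ → ℝ
  | 0 => 0
  | (p+1) => 21 * b * (50 * b) ^ p

lemma mpeC_nonneg {b : ℝ} (hb : 0 ≤ b) : ∀ p, 0 ≤ mpeC b p
  | 0 => le_refl 0
  | (q+1) => by simp only [mpeC]; positivity

lemma mpeC_le_pow {b x : ℝ} (hb : 0 ≤ b) (h21 : 21 * b ≤ x) (h50 : 50 * b ≤ x) :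
    ∀ p, mpeC b p ≤ x ^ p
  | 0 => by norm_num [mpeC]
  | (q+1) => by
      simp only [mpeC, pow_succ]
      have hx : (0:ℝ) ≤ x := le_trans (by positivity) h50
      have h1 : (50*b) ^ q ≤ x ^ q := pow_le_pow_left₀ (by positivity) h50 q
      nlinarith [pow_nonneg (by positivity : (0:ℝ) ≤ 50*b) q, pow_nonneg hx q]

lemma mpeC_small {κ b : ℝ} (hκ0 : 0 < κ) (hb0 : 0 < b) (hbκ2 : 50 * b ≤ κ^2/2)
    (hbκ3 : 105 * b ≤ κ^3/32) :
    ∀ p, 5 * mpeC b p ≤ 1/16 * (1/2) ^ p * (κ ^ p * κ ^ p * κ)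
  | 0 => by simp only [mpeC, pow_zero]; nlinarith
  | (q+1) => by
      simp only [mpeC]
      have h1 : (50*b) ^ q ≤ ((1/2) * κ^2) ^ q :=
        pow_le_pow_left₀ (by positivity) (by nlinarith) q
      have e : (1/16:ℝ) * (1/2) ^ (q+1) * (κ ^ (q+1) * κ ^ (q+1) * κ)
          = (1/32) * (((1/2) * κ^2) ^ q * κ^3) := by ring
      rw [e]
      have h5 : (0:ℝ) ≤ ((1/2) * κ^2) ^ q := by positivity
      have h6 : 105 * b * (50*b) ^ q ≤ 105 * b * (((1/2) * κ^2) ^ q) := by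
        nlinarith [pow_nonneg (by positivity : (0:ℝ) ≤ 50*b) q]
      nlinarith [hbκ3]

lemma mpe_key (κ b : ℝ) (hκ0 : 0 < κ) (hκ5 : κ ≤ 5) (hb0 : 0 < b) (hb : b < κ ^ 3 / 100000)
    (n : ℕ) (v : E2) (hv : ‖v‖ = 1) (A A' : ℕ → (E2 →L[ℝ] E2))
    (hdet : ∀ i, 1 ≤ i → i ≤ n → LinearMap.det ((A i) : E2 →ₗ[ℝ] E2) = b)
    (hA5 : ∀ i, 1 ≤ i → i ≤ n → ‖A i‖ ≤ 5)
    (hgrow : ∀ i, 1 ≤ i → i ≤ n → κ ^ i ≤ ‖matProd A i v‖)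
    (hpert : ∀ i, 1 ≤ i → i ≤ n → ‖A i - A' i‖ < (2 * b) ^ i) :
    ∀ i, i ≤ n →
      |mpeCross (matProd A' i v) (matProd A i v)| ≤ mpeC b i ∧
      |⟪matProd A' i v, matProd A i v⟫ - ‖matProd A i v‖ ^ 2|
        ≤ 1/4 * (1 - (1/2) ^ i) * ‖matProd A i v‖ ^ 2 := by
  -- basic consequences of b < κ^3/100000 and κ ≤ 5
  have hκ3 : κ ^ 3 ≤ 25 * κ := by nlinarith [mul_nonneg (mul_nonneg hκ0.le (sub_nonneg.mpr hκ5)) (by linarith : (0:ℝ) ≤ 5 + κ)]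
  have hκ2 : κ ^ 3 ≤ 5 * κ ^ 2 := by nlinarith
  have hbκ : b < κ / 4000 := by nlinarith
  have hbκ2 : 50 * b ≤ κ ^ 2 / 2 := by nlinarith
  have hbκ3 : 105 * b ≤ κ ^ 3 / 32 := by nlinarith
  have h21κ : 21 * b ≤ κ := by nlinarith
  have h50κ : 50 * b ≤ κ := by nlinarith
  have h2150 : 21 * b ≤ 50 * b := by nlinarith
  have h10κ : 10 * b ≤ κ / 2 := by nlinarith
  have h4κ : 4 * b ≤ κ / 16 := by nlinarith
  intro i
  induction i with
  | zero =>
      intro _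
      constructor
      · simp [matProd_zero_apply, mpe_cross_self, mpeC]
      · rw [matProd_zero_apply, matProd_zero_apply, real_inner_self_eq_norm_sq, hv]
        norm_num
  | succ p IH =>
      intro hn
      have hpn : p ≤ n := Nat.le_of_succ_le hn
      obtain ⟨Hc, Hd⟩ := IH hpn
      set w : E2 := matProd A p v with hw
      set w' : E2 := matProd A' p v with hw'
      set N : ℝ := ‖w‖ with hN
      set W : ℝ := ‖w'‖ with hWdef
      have hNκ : κ ^ p ≤ N := by
        rcases Nat.eq_zero_or_pos p with h0 | h1
        · rw [hN, hw, h0, matProd_zero_apply, hv]; norm_num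
        · exact hgrow p h1 hpn
      have hN5 : N ≤ 5 ^ p := mpe_norm_matProd_le A v hv n hA5 p hpn
      have hκp : (0:ℝ) < κ ^ p := pow_pos hκ0 p
      have hN0 : (0:ℝ) < N := lt_of_lt_of_le hκp hNκ
      set wi : E2 := matProd A (p+1) v with hwidef
      set M : ℝ := ‖wi‖ with hM
      have hMκ : κ ^ (p+1) ≤ M := hgrow (p+1) (Nat.succ_le_succ (Nat.zero_le p)) hn
      have hM0 : (0:ℝ) < M := lt_of_lt_of_le (pow_pos hκ0 _) hMκ
      have hwi : wi = A (p+1) w := rfl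
      have hM5N : M ≤ 5 * N := by
        rw [hM, hwi]
        calc ‖A (p+1) w‖ ≤ ‖A (p+1)‖ * N := (A (p+1)).le_opNorm w
          _ ≤ 5 * N := mul_le_mul_of_nonneg_right
              (hA5 (p+1) (Nat.succ_le_succ (Nat.zero_le p)) hn) hN0.le
      have h5p : (0:ℝ) < 5 ^ p := by positivity
      have hM5 : M ≤ 5 ^ (p+1) := by
        calc M ≤ 5 * N := hM5N
          _ ≤ 5 * 5 ^ p := by linarith only [hN5]
          _ = 5 ^ (p+1) := by ring
      set d : ℝ := ⟪w', w⟫ with hd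
      set c : ℝ := mpeCross w' w with hc
      set s : ℝ := d / N ^ 2 with hs
      set z : E2 := w' - s • w with hz
      have hlag : d ^ 2 + c ^ 2 = W ^ 2 * N ^ 2 := mpe_lagrange w' w
      -- ‖z‖ * N = |c|
      have hzsq : ‖z‖ ^ 2 = W ^ 2 - 2 * s * d + s ^ 2 * N ^ 2 := by
        rw [hz, @norm_sub_sq_real, real_inner_smul_right, norm_smul]
        rw [Real.norm_eq_abs, mul_pow, sq_abs]
        rw [← hd, ← hN, ← hWdef]
        ring
      have hzN2 : (‖z‖ * N) ^ 2 = c ^ 2 := by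
        have hsN : s * N ^ 2 = d := by
          rw [hs]; field_simp
        linear_combination N^2*hzsq - hlag + (s*N^2 - d)*hsN
      have hzN : ‖z‖ * N = |c| := by
        rw [← Real.sqrt_sq (mul_nonneg (norm_nonneg z) hN0.le), hzN2, Real.sqrt_sq_eq_abs]
      -- key decomposition
      have hkey : matProd A' (p+1) v = s • wi + (A (p+1)) z - (A (p+1) - A' (p+1)) w' := by
        rw [matProd_succ_apply, ← hw', hz, map_sub, map_smul, hwi]
        simp only [ContinuousLinearMap.sub_apply]
        abel
      -- pieces
      have hEop : ‖A (p+1) - A' (p+1)‖ ≤ (2*b) ^ (p+1) :=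
        (hpert (p+1) (Nat.succ_le_succ (Nat.zero_le p)) hn).le
      have hEw : ‖(A (p+1) - A' (p+1)) w'‖ ≤ (2*b) ^ (p+1) * W := by
        calc ‖(A (p+1) - A' (p+1)) w'‖ ≤ ‖A (p+1) - A' (p+1)‖ * W :=
              (A (p+1) - A' (p+1)).le_opNorm w'
          _ ≤ (2*b) ^ (p+1) * W := mul_le_mul_of_nonneg_right hEop (norm_nonneg _)
      have hAz : ‖(A (p+1)) z‖ ≤ 5 * ‖z‖ := by
        calc ‖(A (p+1)) z‖ ≤ ‖A (p+1)‖ * ‖z‖ := (A (p+1)).le_opNorm z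
          _ ≤ 5 * ‖z‖ := mul_le_mul_of_nonneg_right
              (hA5 (p+1) (Nat.succ_le_succ (Nat.zero_le p)) hn) (norm_nonneg _)
      -- cross recursion
      have hcrec : mpeCross (matProd A' (p+1) v) wi
          = b * c - mpeCross ((A (p+1) - A' (p+1)) w') wi := by
        rw [hkey, mpe_cross_sub_left, mpe_cross_add_left, mpe_cross_smul_left, mpe_cross_self]
        have h1 : mpeCross ((A (p+1)) z) wi = b * mpeCross z w := by
          rw [hwi, mpe_cross_map, hdet (p+1) (Nat.succ_le_succ (Nat.zero_le p)) hn]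
        have h2 : mpeCross z w = c := by
          rw [hz, mpe_cross_sub_left, mpe_cross_smul_left, mpe_cross_self, ← hc]; ring
        rw [h1, h2]; ring
      -- inner recursion
      have hdrec : ⟪matProd A' (p+1) v, wi⟫
          = s * M ^ 2 + ⟪(A (p+1)) z, wi⟫ - ⟪(A (p+1) - A' (p+1)) w', wi⟫ := by
        rw [hkey, inner_sub_left, inner_add_left, real_inner_smul_left,
          real_inner_self_eq_norm_sq, ← hM]
      -- bounds involving mpeC
      have hCle : mpeC b p ≤ (50*b) ^ p := mpeC_le_pow hb0.le h2150 (le_refl _) p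
      have hCpκ : mpeC b p ≤ κ ^ p := mpeC_le_pow hb0.le h21κ h50κ p
      have hcN : |c| ≤ N := le_trans Hc (le_trans hCpκ hNκ)
      have h2p0 : (0:ℝ) ≤ (1/2) ^ p := by positivity
      have h2p1 : ((1:ℝ)/2) ^ p ≤ 1 := pow_le_one₀ (by norm_num) (by norm_num)
      have hdabs := abs_le.1 Hd
      have hx12 : (0:ℝ) ≤ (1/2) ^ p * N ^ 2 := by positivity
      have hdub : d ≤ (5/4) * N ^ 2 := by linarith only [hdabs.2, hx12, sq_nonneg N]
      have hdlb : (3/4) * N ^ 2 ≤ d := by linarith only [hdabs.1, hx12, sq_nonneg N]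
      have hd0 : 0 ≤ d := le_trans (by positivity) hdlb
      have hd2 : d * d ≤ ((5/4) * N ^ 2) * ((5/4) * N ^ 2) := mul_self_le_mul_self hd0 hdub
      have hc2 : |c| * |c| ≤ N * N := mul_self_le_mul_self (abs_nonneg c) hcN
      have hN2pos : (0:ℝ) < N ^ 2 := by positivity
      have hW2 : W ^ 2 * N ^ 2 ≤ (25/16) * N^4 + N ^ 2 := by
        have hsq := sq_abs c
        linarith only [hlag, hd2, hc2, hsq]
      have hW2' : W ^ 2 ≤ (25/16) * N ^ 2 + 1 := by
        calc W ^ 2 = W ^ 2 * N ^ 2 / N ^ 2 := by field_simp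
          _ ≤ ((25/16) * N^4 + N ^ 2) / N ^ 2 := by gcongr
          _ = (25/16) * N ^ 2 + 1 := by field_simp
      have h5p1 : (1:ℝ) ≤ 5 ^ p := one_le_pow₀ (by norm_num)
      have hWle : W ≤ 2 * 5 ^ p := by
        have hN2sq : N ^ 2 ≤ (5 ^ p) ^ 2 := pow_le_pow_left₀ hN0.le hN5 2
        have h1sq : (1:ℝ) ≤ (5 ^ p) ^ 2 := one_le_pow₀ h5p1
        have hsq : W ^ 2 ≤ (2 * 5 ^ p) ^ 2 := by linarith only [hW2', hN2sq, h1sq]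
        calc W = Real.sqrt (W ^ 2) := (Real.sqrt_sq (norm_nonneg w')).symm
          _ ≤ Real.sqrt ((2 * 5 ^ p) ^ 2) := Real.sqrt_le_sqrt hsq
          _ = 2 * 5 ^ p := Real.sqrt_sq (by positivity)
      constructor
      · -- cross goal
        rw [hcrec]
        have hXb : |mpeCross ((A (p+1) - A' (p+1)) w') wi| ≤ (2*b) ^ (p+1) * W * M := by
          calc |mpeCross ((A (p+1) - A' (p+1)) w') wi|
              ≤ ‖(A (p+1) - A' (p+1)) w'‖ * M := mpe_abs_cross_le _ _
            _ ≤ (2*b) ^ (p+1) * W * M := mul_le_mul_of_nonneg_right hEw hM0.le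
        have htri : |b * c - mpeCross ((A (p+1) - A' (p+1)) w') wi|
            ≤ b * |c| + (2*b) ^ (p+1) * W * M := by
          have h1 := abs_sub (b * c) (mpeCross ((A (p+1) - A' (p+1)) w') wi)
          rw [abs_mul, abs_of_pos hb0] at h1
          linarith only [h1, hXb]
        have hXpos : (0:ℝ) ≤ (2*b) ^ (p+1) := by positivity
        have hprod : (2*b) ^ (p+1) * W * M ≤ (2*b) ^ (p+1) * (2 * 5 ^ p) * 5 ^ (p+1) := by
          have h1 : (2*b) ^ (p+1) * W ≤ (2*b) ^ (p+1) * (2 * 5 ^ p) :=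
            mul_le_mul_of_nonneg_left hWle hXpos
          have h2 : (0:ℝ) ≤ (2*b) ^ (p+1) * (2 * 5 ^ p) := by positivity
          exact mul_le_mul h1 hM5 hM0.le h2
        have hpowid : (2*b) ^ (p+1) * (2 * 5 ^ p) * 5 ^ (p+1) = 20 * b * (50*b) ^ p := by
          have e1 : (2*b) ^ p * 5 ^ p * 5 ^ p = (50*b) ^ p := by
            rw [← mul_pow, ← mul_pow, show (2*b)*5*5 = 50*b by ring]
          calc (2*b) ^ (p+1) * (2 * 5 ^ p) * 5 ^ (p+1)
              = ((2*b) ^ p * 5 ^ p * 5 ^ p) * (20 * b) := by rw [pow_succ, pow_succ]; ring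
            _ = 20 * b * (50*b) ^ p := by rw [e1]; ring
        have hfin : b * |c| + (2*b) ^ (p+1) * W * M ≤ 21 * b * (50*b) ^ p := by
          have h1 : b * |c| ≤ b * (50*b) ^ p :=
            mul_le_mul_of_nonneg_left (le_trans Hc hCle) hb0.le
          have h2 : (2*b) ^ (p+1) * W * M ≤ 20 * b * (50*b) ^ p := by
            rw [← hpowid]; exact hprod
          linarith
        calc |b * c - mpeCross ((A (p+1) - A' (p+1)) w') wi|
            ≤ b * |c| + (2*b) ^ (p+1) * W * M := htri
          _ ≤ 21 * b * (50*b) ^ p := hfin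
          _ = mpeC b (p+1) := by simp [mpeC]
      · -- inner product goal
        have hs1 : |s - 1| ≤ 1/4 * (1 - (1/2) ^ p) := by
          have he : s - 1 = (d - N ^ 2) / N ^ 2 := by rw [hs]; field_simp
          rw [he, abs_div, abs_of_pos hN2pos, div_le_iff₀ hN2pos]
          linarith only [Hd]
        have hiAz : |⟪(A (p+1)) z, wi⟫| ≤ 5 * ‖z‖ * M := by
          calc |⟪(A (p+1)) z, wi⟫| ≤ ‖(A (p+1)) z‖ * M := abs_real_inner_le_norm _ _
            _ ≤ 5 * ‖z‖ * M := mul_le_mul_of_nonneg_right hAz hM0.le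
        have hiEw : |⟪(A (p+1) - A' (p+1)) w', wi⟫| ≤ (2*b) ^ (p+1) * W * M := by
          calc |⟪(A (p+1) - A' (p+1)) w', wi⟫| ≤ ‖(A (p+1) - A' (p+1)) w'‖ * M :=
                abs_real_inner_le_norm _ _
            _ ≤ (2*b) ^ (p+1) * W * M := mul_le_mul_of_nonneg_right hEw hM0.le
        -- two smallness estimates
        have hzb : ‖z‖ * κ ^ p ≤ mpeC b p := by
          calc ‖z‖ * κ ^ p ≤ ‖z‖ * N := by
                exact mul_le_mul_of_nonneg_left hNκ (norm_nonneg z)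
            _ = |c| := hzN
            _ ≤ mpeC b p := Hc
        have hzsmall : 5 * ‖z‖ ≤ 1/16 * (1/2) ^ p * κ ^ (p+1) := by
          have hsm := mpeC_small hκ0 hb0 hbκ2 hbκ3 p
          have h2 : 5 * ‖z‖ * κ ^ p ≤ (1/16 * (1/2) ^ p * κ ^ (p+1)) * κ ^ p := by
            have e : (1/16:ℝ) * (1/2) ^ p * (κ ^ p * κ ^ p * κ)
                = (1/16 * (1/2) ^ p * κ ^ (p+1)) * κ ^ p := by ring
            linarith only [hzb, hsm, e]
          exact le_of_mul_le_mul_right h2 hκp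
        have hEsmall : (2*b) ^ (p+1) * W ≤ 1/16 * (1/2) ^ p * κ ^ (p+1) := by
          have e3 : (2*b) ^ p * 5 ^ p = (10*b) ^ p := by
            rw [← mul_pow, show (2*b)*5 = 10*b by ring]
          have h1 : (10*b) ^ p ≤ (κ/2) ^ p :=
            pow_le_pow_left₀ (by positivity) h10κ p
          have e4 : (1/2:ℝ) ^ p * κ ^ p = (κ/2) ^ p := by
            rw [← mul_pow, show (1/2:ℝ)*κ = κ/2 by ring]
          have hkp : (0:ℝ) ≤ (κ/2) ^ p := by positivity
          calc (2*b) ^ (p+1) * W ≤ (2*b) ^ (p+1) * (2 * 5 ^ p) := by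
                have : (0:ℝ) ≤ (2*b) ^ (p+1) := by positivity
                exact mul_le_mul_of_nonneg_left hWle this
            _ = 4 * b * ((2*b) ^ p * 5 ^ p) := by rw [pow_succ]; ring
            _ = 4 * b * (10*b) ^ p := by rw [e3]
            _ ≤ 4 * b * (κ/2) ^ p := mul_le_mul_of_nonneg_left h1 (by positivity)
            _ ≤ (κ/16) * (κ/2) ^ p := mul_le_mul_of_nonneg_right h4κ hkp
            _ = 1/16 * ((1/2) ^ p * κ ^ p) * κ := by rw [e4]; ring
            _ = 1/16 * (1/2) ^ p * κ ^ (p+1) := by rw [pow_succ]; ring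
        have hsum : 5 * ‖z‖ * M + (2*b) ^ (p+1) * W * M ≤ (1/8) * (1/2) ^ p * M ^ 2 := by
          have hsum1 : 5 * ‖z‖ + (2*b) ^ (p+1) * W ≤ (1/8) * ((1/2) ^ p * M) := by
            have h7 : (1/8) * ((1/2:ℝ) ^ p * κ ^ (p+1)) ≤ (1/8) * ((1/2) ^ p * M) :=
              mul_le_mul_of_nonneg_left (mul_le_mul_of_nonneg_left hMκ h2p0) (by norm_num)
            linarith only [h7, hzsmall, hEsmall]
          calc 5 * ‖z‖ * M + (2*b) ^ (p+1) * W * M = (5 * ‖z‖ + (2*b) ^ (p+1) * W) * M := by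
                ring
            _ ≤ ((1/8) * ((1/2) ^ p * M)) * M := mul_le_mul_of_nonneg_right hsum1 hM0.le
            _ = (1/8) * (1/2) ^ p * M ^ 2 := by ring
        have htri2 : |⟪matProd A' (p+1) v, wi⟫ - M ^ 2|
            ≤ |s - 1| * M ^ 2 + 5 * ‖z‖ * M + (2*b) ^ (p+1) * W * M := by
          rw [hdrec]
          have e5 : s * M ^ 2 + ⟪(A (p+1)) z, wi⟫ - ⟪(A (p+1) - A' (p+1)) w', wi⟫ - M ^ 2
              = (s - 1) * M ^ 2 + ⟪(A (p+1)) z, wi⟫ - ⟪(A (p+1) - A' (p+1)) w', wi⟫ := by ring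
          rw [e5]
          have h8 := abs_sub ((s - 1) * M ^ 2 + ⟪(A (p+1)) z, wi⟫)
            (⟪(A (p+1) - A' (p+1)) w', wi⟫)
          have h9 := abs_add_le ((s - 1) * M ^ 2) (⟪(A (p+1)) z, wi⟫)
          have h10 : |(s - 1) * M ^ 2| = |s - 1| * M ^ 2 := by
            rw [abs_mul, abs_of_nonneg (sq_nonneg M)]
          rw [h10] at h9
          linarith only [h8, h9, hiAz, hiEw]
        have hs1M : |s - 1| * M ^ 2 ≤ 1/4 * (1 - (1/2) ^ p) * M ^ 2 :=
          mul_le_mul_of_nonneg_right hs1 (sq_nonneg M)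
        have efin : (1/4) * (1 - (1/2:ℝ) ^ (p+1)) * M ^ 2
            = 1/4 * (1 - (1/2) ^ p) * M ^ 2 + (1/8) * (1/2) ^ p * M ^ 2 := by
          rw [pow_succ]; ring
        calc |⟪matProd A' (p+1) v, wi⟫ - M ^ 2|
            ≤ |s - 1| * M ^ 2 + 5 * ‖z‖ * M + (2*b) ^ (p+1) * W * M := htri2
          _ ≤ 1/4 * (1 - (1/2) ^ p) * M ^ 2 + (1/8) * (1/2) ^ p * M ^ 2 := by
              linarith only [hs1M, hsum]
          _ = 1/4 * (1 - (1/2) ^ (p+1)) * M ^ 2 := by rw [efin]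

/-- Matrix Perturbation Lemma, expansion estimate: for every `κ ∈ (0, 5]` there is
`b₀ ∈ (0, κ)` such that for every `b ∈ (0, b₀)` there is `λ` with `b < λ < min 1 κ`
such that for all `n ≥ 1`, every unit vector `v`, and all matrices `A₁, …, Aₙ`,
`A₁', …, Aₙ'` of determinant `b` and norm at most `5`, if `‖Aⁱ v‖ ≥ κⁱ` and
`‖Aᵢ - Aᵢ'‖ < λⁱ` for all `1 ≤ i ≤ n`, then `‖A'ⁱ v‖ ≥ κⁱ / 2` for all `1 ≤ i ≤ n`. -/
theorem matrix_perturbation_expansion :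
    ∀ κ : ℝ, 0 < κ → κ ≤ 5 →
    ∃ b₀ : ℝ, 0 < b₀ ∧ b₀ < κ ∧
    ∀ b : ℝ, 0 < b → b < b₀ →
    ∃ lam : ℝ, b < lam ∧ lam < min 1 κ ∧
    ∀ n : ℕ, 1 ≤ n → ∀ v : E2, ‖v‖ = 1 →
    ∀ A A' : ℕ → (E2 →L[ℝ] E2),
    (∀ i : ℕ, 1 ≤ i → i ≤ n →
      LinearMap.det (A i : E2 →ₗ[ℝ] E2) = b ∧ LinearMap.det (A' i : E2 →ₗ[ℝ] E2) = b ∧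
      ‖A i‖ ≤ 5 ∧ ‖A' i‖ ≤ 5) →
    (∀ i : ℕ, 1 ≤ i → i ≤ n → κ ^ i ≤ ‖matProd A i v‖ ∧ ‖A i - A' i‖ < lam ^ i) →
    ∀ i : ℕ, 1 ≤ i → i ≤ n → κ ^ i / 2 ≤ ‖matProd A' i v‖ := by
  intro κ hκ0 hκ5
  have hκ3 : κ ^ 3 ≤ 25 * κ := by
    nlinarith [mul_nonneg (mul_nonneg hκ0.le (sub_nonneg.mpr hκ5)) (by linarith : (0:ℝ) ≤ 5 + κ)]
  have h125 : κ ^ 3 ≤ 125 := by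
    have := pow_le_pow_left₀ hκ0.le hκ5 3
    norm_num at this; linarith
  refine ⟨κ ^ 3 / 100000, by positivity, by nlinarith, ?_⟩
  intro b hb0 hbb0
  refine ⟨2 * b, by linarith, ?_, ?_⟩
  · rw [lt_min_iff]
    constructor
    · nlinarith
    · nlinarith
  intro n hn v hv A A' hmat hcond
  have hdet : ∀ i, 1 ≤ i → i ≤ n → LinearMap.det ((A i) : E2 →ₗ[ℝ] E2) = b :=
    fun i h1 h2 => (hmat i h1 h2).1
  have hA5 : ∀ i, 1 ≤ i → i ≤ n → ‖A i‖ ≤ 5 := fun i h1 h2 => (hmat i h1 h2).2.2.1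
  have hgrow : ∀ i, 1 ≤ i → i ≤ n → κ ^ i ≤ ‖matProd A i v‖ :=
    fun i h1 h2 => (hcond i h1 h2).1
  have hpert : ∀ i, 1 ≤ i → i ≤ n → ‖A i - A' i‖ < (2 * b) ^ i :=
    fun i h1 h2 => (hcond i h1 h2).2
  have key := mpe_key κ b hκ0 hκ5 hb0 (by linarith) n v hv A A' hdet hA5 hgrow hpert
  intro i h1 h2
  obtain ⟨Hc, Hd⟩ := key i h2
  have hNκ : κ ^ i ≤ ‖matProd A i v‖ := hgrow i h1 h2
  have hN0 : (0:ℝ) < ‖matProd A i v‖ := lt_of_lt_of_le (pow_pos hκ0 i) hNκ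
  have hinner := real_inner_le_norm (matProd A' i v) (matProd A i v)
  have hx12 : (0:ℝ) ≤ (1/2) ^ i * ‖matProd A i v‖ ^ 2 := by positivity
  have hd1 : (3/4) * ‖matProd A i v‖ ^ 2 ≤ ⟪matProd A' i v, matProd A i v⟫ := by
    have hd2 := (abs_le.1 Hd).1
    linarith only [hd2, hx12, sq_nonneg (‖matProd A i v‖)]
  nlinarith [hinner, hd1, mul_le_mul_of_nonneg_right hNκ hN0.le, hN0, pow_pos hκ0 i,
    norm_nonneg (matProd A' i v)]
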